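/- Let M be a von Neumann algebra, B a C*-algebra, and T : M → B a (not necessarily linear) 2-local triple homomorphism. Let e ∈ M be a tripotent, y ∈ M with {e,e,y} = (1/2)y, and z ∈ M with {e,e,z} = 0. Then T(λ e + y + z) = λ T(e) + T(y) + T(z) for every λ ∈ ℂ; in particular T(y + z) = T(y) + T(z). -/

import Mathlib

/-- The triple product `{x,y,z} = (1/2)(x y* z + z y* x)` on a C*-algebra. -/
noncomputable def tp {A : Type*} [NonUnitalCStarAlgebra A] (x y z : A) : A :=
  (2⁻¹ : ℂ) • (x * star y * z + z * star y * x)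

/-- A bounded linear map between C*-algebras is a triple homomorphism if it preserves
the triple product. -/
def IsTripleHom {A B : Type*} [NonUnitalCStarAlgebra A] [NonUnitalCStarAlgebra B]
    (Φ : A →L[ℂ] B) : Prop :=
  ∀ x y z : A, Φ (tp x y z) = tp (Φ x) (Φ y) (Φ z)

/-- A (not necessarily linear nor continuous) map `T : A → B` is a 2-local triple
homomorphism if for every `a b : A` there is a bounded linear triple homomorphism
`Φ : A →L[ℂ] B` agreeing with `T` at `a` and at `b`. -/
def Is2LocalTripleHom {A B : Type*} [NonUnitalCStarAlgebra A] [NonUnitalCStarAlgebra B]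
    (T : A → B) : Prop :=
  ∀ a b : A, ∃ Φ : A →L[ℂ] B, IsTripleHom Φ ∧ Φ a = T a ∧ Φ b = T b

section VonNeumannSetup

variable {H : Type*} [NormedAddCommGroup H] [InnerProductSpace ℂ H] [CompleteSpace H]

instance VonNeumannAlgebra.instSMulMemClass :
    SMulMemClass (VonNeumannAlgebra H) ℂ (H →L[ℂ] H) where
  smul_mem {s} c m hm := s.toStarSubalgebra.smul_mem hm c

/-- A von Neumann algebra is norm closed in `H →L[ℂ] H` (being a double centralizer). -/
instance VonNeumannAlgebra.instIsClosedCoe (M : VonNeumannAlgebra H) :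
    IsClosed (M : Set (H →L[ℂ] H)) := by
  have key : ∀ s : Set (H →L[ℂ] H), IsClosed (Set.centralizer s) := fun s => by
    have h : Set.centralizer s = ⋂ g ∈ s, {z : H →L[ℂ] H | g * z = z * g} := by
      ext z; simp [Set.mem_centralizer_iff]
    rw [h]
    exact isClosed_biInter fun g _ =>
      isClosed_eq (continuous_const.mul continuous_id) (continuous_id.mul continuous_const)
  rw [← M.centralizer_centralizer]
  exact key _

/-- A von Neumann algebra is in particular a (unital) C*-algebra. -/
noncomputable example (M : VonNeumannAlgebra H) : CStarAlgebra M := inferInstance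

end VonNeumannSetup

namespace TwoLocalAux

section Ring

variable {R : Type*} [NonUnitalRing R] [StarRing R]

lemma idem_p {f : R} (hf : f * star f * f = f) :
    (f * star f) * (f * star f) = f * star f := by
  rw [← mul_assoc, hf]

lemma f_q {f : R} (hf : f * star f * f = f) : f * (star f * f) = f := by
  rw [← mul_assoc, hf]

lemma idem_q {f : R} (hf : f * star f * f = f) :
    (star f * f) * (star f * f) = star f * f := by
  rw [mul_assoc, f_q hf]

lemma sfp {f : R} (hf : f * star f * f = f) : star f * (f * star f) = star f := by
  have h := congrArg star hf
  simpa [star_mul, star_star, mul_assoc] using h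

lemma qsf {f : R} (hf : f * star f * f = f) : (star f * f) * star f = star f := by
  have h := congrArg star (f_q hf)
  simpa [star_mul, star_star, mul_assoc] using h

/-- If `p x + x q = x` (Peirce-1 type condition) for idempotents, then `p x q = 0`. -/
lemma peirce1_pxq {p q x : R} (hpp : p * p = p) (hqq : q * q = q)
    (hx : p * x + x * q = x) : p * (x * q) = 0 := by
  have h := congrArg (fun w => p * (w * q)) hx
  simp only [add_mul, mul_add] at h
  have h1 : p * (p * x * q) = p * (x * q) := by
    rw [mul_assoc p x q, ← mul_assoc p p, hpp]
  have h2 : p * (x * q * q) = p * (x * q) := by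
    rw [mul_assoc x q q, hqq]
  rw [h1, h2] at h
  exact add_eq_left.mp h

/-- `a + a = 0` implies `a = 0` in a `ℂ`-module. -/
lemma double_zero {M : Type*} [AddCommGroup M] [Module ℂ M] {a : M} (h : a + a = 0) : a = 0 := by
  have h2 : (2 : ℂ) • a = 0 := by rw [two_smul]; exact h
  calc a = (2⁻¹ : ℂ) • ((2 : ℂ) • a) := by rw [smul_smul]; norm_num
    _ = 0 := by rw [h2, smul_zero]

variable [Module ℂ R]

/-- If `p x + x q = 0` (Peirce-0 type condition) for idempotents, then `p x = 0 ∧ x q = 0`. -/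
lemma peirce0 {p q x : R} (hpp : p * p = p) (hqq : q * q = q)
    (hx : p * x + x * q = 0) : p * x = 0 ∧ x * q = 0 := by
  have hq0 : p * (x * q) = 0 := by
    have h := congrArg (fun w => p * (w * q)) hx
    simp only [add_mul, mul_add, mul_zero, zero_mul] at h
    have h1 : p * (p * x * q) = p * (x * q) := by
      rw [mul_assoc p x q, ← mul_assoc p p, hpp]
    have h2 : p * (x * q * q) = p * (x * q) := by
      rw [mul_assoc x q q, hqq]
    rw [h1, h2] at h
    exact double_zero h
  constructor
  · have h := congrArg (fun w => p * w) hx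
    simp only [mul_add, mul_zero] at h
    rw [← mul_assoc p p x, hpp, hq0, add_zero] at h
    exact h
  · have h := congrArg (fun w => w * q) hx
    simp only [add_mul, zero_mul] at h
    rw [mul_assoc x q q, hqq, mul_assoc p x q, hq0, zero_add] at h
    exact h

/-- Full orthogonality products from the Peirce-0 corner conditions. -/
lemma orth_products {f x : R} (hf : f * star f * f = f)
    (hpx : (f * star f) * x = 0) (hxq : x * (star f * f) = 0) :
    star f * x = 0 ∧ x * star f = 0 ∧ f * star x = 0 ∧ star x * f = 0 := by
  have hsfx : star f * x = 0 := by
    calc star f * x = (star f * (f * star f)) * x := by rw [sfp hf]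
      _ = star f * ((f * star f) * x) := mul_assoc (star f) (f * star f) x
      _ = 0 := by rw [hpx, mul_zero]
  have hxsf : x * star f = 0 := by
    calc x * star f = x * ((star f * f) * star f) := by rw [qsf hf]
      _ = (x * (star f * f)) * star f := (mul_assoc x (star f * f) (star f)).symm
      _ = 0 := by rw [hxq, zero_mul]
  refine ⟨hsfx, hxsf, ?_, ?_⟩
  · have h := congrArg star hxsf
    simpa [star_mul, star_star] using h
  · have h := congrArg star hsfx
    simpa [star_mul, star_star] using h

/-- If `f` is a tripotent, `d` is fully Peirce-0 orthogonal to `f`, and `f + d` is a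
tripotent, then `d` is a tripotent. -/
lemma orth_tripotent_add {f d : R} (hf : f * star f * f = f)
    (h1 : (f * star f) * d = 0) (h2 : d * (star f * f) = 0)
    (hsum : (f + d) * star (f + d) * (f + d) = f + d) :
    d * star d * d = d := by
  obtain ⟨hsfd, hdsf, hfsd, hsdf⟩ := orth_products hf h1 h2
  have e1 : f * star d * f = 0 := by rw [hfsd, zero_mul]
  have e2 : f * star d * d = 0 := by rw [hfsd, zero_mul]
  have e3 : d * star f * f = 0 := by rw [hdsf, zero_mul]
  have e4 : d * star f * d = 0 := by rw [hdsf, zero_mul]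
  have e5 : f * star f * d = 0 := h1
  have e6 : d * star d * f = 0 := by rw [mul_assoc, hsdf, mul_zero]
  have h := hsum
  simp only [star_add, mul_add, add_mul] at h
  rw [hf, e1, e2, e3, e4, e5, e6] at h
  simp only [add_zero, zero_add] at h
  exact add_left_cancel h

end Ring

section CStar

variable {B : Type*} [NonUnitalCStarAlgebra B]

lemma tp_def (x y z : B) : tp x y z = (2⁻¹ : ℂ) • (x * star y * z + z * star y * x) := rfl

lemma tp_cube (x : B) : tp x x x = x * star x * x := by
  rw [tp_def, ← two_smul ℂ (x * star x * x), smul_smul]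
  norm_num

lemma tp_add_left (x x' w v : B) : tp (x + x') w v = tp x w v + tp x' w v := by
  simp only [tp_def, add_mul, mul_add]
  module

lemma tp_smul_left (c : ℂ) (x w v : B) : tp (c • x) w v = c • tp x w v := by
  simp only [tp_def, smul_mul_assoc, mul_smul_comm]
  module

lemma tp_add_middle (x w w' v : B) : tp x (w + w') v = tp x w v + tp x w' v := by
  simp only [tp_def, star_add, add_mul, mul_add]
  module

lemma tp_smul_middle (c : ℂ) (x w v : B) :
    tp x (c • w) v = (starRingEnd ℂ c) • tp x w v := by
  simp only [tp_def, star_smul, RCLike.star_def, smul_mul_assoc, mul_smul_comm]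
  module

lemma tp_add_right (x w v v' : B) : tp x w (v + v') = tp x w v + tp x w v' := by
  simp only [tp_def, add_mul, mul_add]
  module

lemma tp_smul_right (c : ℂ) (x w v : B) : tp x w (c • v) = c • tp x w v := by
  simp only [tp_def, smul_mul_assoc, mul_smul_comm]
  module

lemma tp_expand (c : ℂ) (u s x : B) :
    tp (c • u + s) (c • u + s) x =
      (c * starRingEnd ℂ c) • tp u u x + c • tp u s x
        + (starRingEnd ℂ c) • tp s u x + tp s s x := by
  rw [tp_add_left, tp_add_middle, tp_add_middle, tp_smul_left, tp_smul_left,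
    tp_smul_middle, tp_smul_middle, smul_smul]
  abel

lemma norm_cube (x : B) : ‖x * star x * x‖ = ‖x‖ ^ 3 := by
  rcases eq_or_ne x 0 with rfl | hx
  · simp
  have hxpos : 0 < ‖x‖ := norm_pos_iff.mpr hx
  refine le_antisymm ?_ ?_
  · calc ‖x * star x * x‖ ≤ ‖x * star x‖ * ‖x‖ := norm_mul_le _ _
      _ = ‖x‖ * ‖x‖ * ‖x‖ := by rw [CStarRing.norm_self_mul_star]
      _ = ‖x‖ ^ 3 := by ring
  · have hsa : star (x * star x) = x * star x := by simp [star_mul]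
    have h2 : ‖(x * star x) * (x * star x)‖ = ‖x‖ * ‖x‖ * (‖x‖ * ‖x‖) := by
      calc ‖(x * star x) * (x * star x)‖ = ‖star (x * star x) * (x * star x)‖ := by rw [hsa]
        _ = ‖x * star x‖ * ‖x * star x‖ := CStarRing.norm_star_mul_self
        _ = ‖x‖ * ‖x‖ * (‖x‖ * ‖x‖) := by rw [CStarRing.norm_self_mul_star]
    have h3 : (x * star x) * (x * star x) = (x * star x * x) * star x :=
      (mul_assoc (x * star x) x (star x)).symm
    have h4 : ‖x‖ * ‖x‖ * (‖x‖ * ‖x‖) ≤ ‖x * star x * x‖ * ‖x‖ := by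
      rw [← h2, h3]
      calc ‖(x * star x * x) * star x‖ ≤ ‖x * star x * x‖ * ‖star x‖ := norm_mul_le _ _
        _ = ‖x * star x * x‖ * ‖x‖ := by rw [norm_star]
    have := le_of_mul_le_mul_right (by nlinarith : ‖x‖ ^ 3 * ‖x‖ ≤ ‖x * star x * x‖ * ‖x‖) hxpos
    exact this

lemma tripotent_norm_le {k : B} (hk : k * star k * k = k) : ‖k‖ ≤ 1 := by
  have h := norm_cube k
  rw [hk] at h
  by_contra hgt
  push_neg at hgt
  have hpos : (0:ℝ) < ‖k‖ := by linarith
  nlinarith [mul_pos (mul_pos hpos (by linarith : (0:ℝ) < ‖k‖ - 1))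
    (by linarith : (0:ℝ) < ‖k‖ + 1)]

lemma tripotent_norm_cases {k : B} (hk : k * star k * k = k) : ‖k‖ = 0 ∨ ‖k‖ = 1 := by
  have h := norm_cube k
  rw [hk] at h
  have h2 : ‖k‖ * (‖k‖ - 1) * (‖k‖ + 1) = 0 := by nlinarith
  rcases mul_eq_zero.mp h2 with h3 | h3
  · rcases mul_eq_zero.mp h3 with h4 | h4
    · exact Or.inl h4
    · exact Or.inr (by linarith)
  · exfalso; nlinarith [norm_nonneg k]

lemma norm_cubeIter (x : B) : ∀ n : ℕ, ‖(fun w : B => w * star w * w)^[n] x‖ = ‖x‖ ^ 3 ^ n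
  | 0 => by simp
  | n + 1 => by
      rw [Function.iterate_succ_apply', norm_cube, norm_cubeIter x n, ← pow_mul, pow_succ]

end CStar

section Hom

variable {A B : Type*} [NonUnitalCStarAlgebra A] [NonUnitalCStarAlgebra B] {Φ : A →L[ℂ] B}

lemma map_cube (h : IsTripleHom Φ) (x : A) :
    Φ (x * star x * x) = Φ x * star (Φ x) * Φ x := by
  have h3 := h x x x
  rwa [tp_cube, tp_cube] at h3

lemma map_cubeIter (h : IsTripleHom Φ) (x : A) :
    ∀ n : ℕ, Φ ((fun w : A => w * star w * w)^[n] x)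
      = (fun w : B => w * star w * w)^[n] (Φ x)
  | 0 => rfl
  | n + 1 => by
      rw [Function.iterate_succ_apply', Function.iterate_succ_apply']
      rw [map_cube h, map_cubeIter h x n]

/-- A bounded linear triple homomorphism is contractive. -/
lemma norm_apply_le (h : IsTripleHom Φ) (x : A) : ‖Φ x‖ ≤ ‖x‖ := by
  by_contra hcon
  push_neg at hcon
  rcases eq_or_ne x 0 with rfl | hx
  · rw [map_zero] at hcon; simp at hcon
  have hxpos : 0 < ‖x‖ := norm_pos_iff.mpr hx
  have key : ∀ n : ℕ, ‖Φ x‖ ^ 3 ^ n ≤ ‖Φ‖ * ‖x‖ ^ 3 ^ n := by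
    intro n
    calc ‖Φ x‖ ^ 3 ^ n = ‖(fun w : B => w * star w * w)^[n] (Φ x)‖ := (norm_cubeIter _ n).symm
      _ = ‖Φ ((fun w : A => w * star w * w)^[n] x)‖ := by rw [map_cubeIter h]
      _ ≤ ‖Φ‖ * ‖(fun w : A => w * star w * w)^[n] x‖ := Φ.le_opNorm _
      _ = ‖Φ‖ * ‖x‖ ^ 3 ^ n := by rw [norm_cubeIter]
  set t : ℝ := ‖Φ x‖ / ‖x‖ with ht_def
  have ht : 1 < t := (one_lt_div hxpos).mpr hcon
  have htn : ∀ n : ℕ, t ^ 3 ^ n ≤ ‖Φ‖ := by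
    intro n
    rw [ht_def, div_pow, div_le_iff₀ (pow_pos hxpos _)]
    exact key n
  obtain ⟨n, hn⟩ := pow_unbounded_of_one_lt ‖Φ‖ ht
  have h1 : t ^ n ≤ t ^ 3 ^ n :=
    pow_le_pow_right₀ ht.le (Nat.le_of_lt (Nat.lt_pow_self (n := n) (a := 3) (by norm_num)))
  linarith [htn n]

end Hom

section Corner

/-- One-sided corner lemma in a unital C⋆-algebra equipped with a compatible
`StarOrderedRing` order. -/
lemma corner_right_unital {C : Type*} [CStarAlgebra C] [PartialOrder C] [StarOrderedRing C]
    {F K : C} (hf : F * star F * F = F) (hk : ‖K‖ ≤ 1)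
    (hc : F * star F * K * (star F * F) = F) :
    K * (star F * F) = F := by
  have key1 : star F * (K * (star F * F)) = star F * F := by
    calc star F * (K * (star F * F))
        = (star F * (F * star F)) * (K * (star F * F)) := by rw [sfp hf]
      _ = star F * ((F * star F) * (K * (star F * F))) := mul_assoc _ _ _
      _ = star F * (F * star F * K * (star F * F)) := by
          rw [mul_assoc (F * star F) K (star F * F)]
      _ = star F * F := by rw [hc]
  have key2 : star F * (F * (star K * F)) = star F * F := by
    have h := congrArg star key1
    simpa [star_mul, star_star, mul_assoc] using h
  set a := K * (star F * F) - F with ha_def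
  have hstara : star a = star F * F * star K - star F := by
    rw [ha_def]
    simp only [star_sub, star_mul, star_star]
  have expand : star a * a
      = star F * (F * (star K * (K * (star F * F)))) - star F * F := by
    rw [hstara, ha_def, sub_mul, mul_sub, mul_sub]
    simp only [mul_assoc]
    rw [key1, key2]
    abel
  have hconj : star F * (F * (star K * (K * (star F * F))))
      ≤ ‖star K * K‖ • (star F * F) := by
    have h := CStarAlgebra.star_left_conjugate_le_norm_smul
      (a := star F * F) (b := star K * K) (IsSelfAdjoint.star_mul_self K)
    simp only [star_mul, star_star, mul_assoc] at h
    rwa [f_q hf] at h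
  have htle : ‖star K * K‖ ≤ 1 := by
    rw [CStarRing.norm_star_mul_self]
    nlinarith [norm_nonneg K]
  have hsmul : ‖star K * K‖ • (star F * F) ≤ star F * F := by
    have hr : (0:ℝ) ≤ 1 - ‖star K * K‖ := by linarith
    have h0 : (0:C) ≤ (1 - ‖star K * K‖) • (star F * F) := by
      have hc0 : star ((((1 - ‖star K * K‖).sqrt : ℝ) : ℂ) • F)
          * ((((1 - ‖star K * K‖).sqrt : ℝ) : ℂ) • F)
          = (1 - ‖star K * K‖) • (star F * F) := by
        rw [star_smul, smul_mul_smul_comm]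
        rw [RCLike.star_def, Complex.conj_ofReal, ← Complex.ofReal_mul,
          Real.mul_self_sqrt hr, Complex.coe_smul]
      rw [← hc0]
      exact star_mul_self_nonneg _
    have h1 : star F * F - ‖star K * K‖ • (star F * F)
        = (1 - ‖star K * K‖) • (star F * F) := by
      rw [sub_smul, one_smul]
    exact sub_nonneg.mp (h1 ▸ h0)
  have hle0 : star a * a ≤ 0 := by
    rw [expand]
    exact sub_nonpos.mpr (hconj.trans hsmul)
  have hzero : star a * a = 0 := le_antisymm hle0 (star_mul_self_nonneg a)
  have ha0 : a = 0 := (CStarRing.star_mul_self_eq_zero_iff a).mp hzero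
  rw [ha_def] at ha0
  exact sub_eq_zero.mp ha0

/-- Corner lemma in a non-unital C⋆-algebra (via the unitization): a contraction `k`
whose `P₂(f)`-corner is the tripotent `f` has vanishing adjacent corners. -/
lemma corner {B : Type*} [NonUnitalCStarAlgebra B] {f k : B}
    (hf : f * star f * f = f) (hk : ‖k‖ ≤ 1)
    (hc : f * star f * k * (star f * f) = f) :
    f * star f * k = f ∧ k * (star f * f) = f := by
  letI : PartialOrder (Unitization ℂ B) := CStarAlgebra.spectralOrder _
  letI : StarOrderedRing (Unitization ℂ B) := CStarAlgebra.spectralOrderedRing _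
  set F : Unitization ℂ B := (f : Unitization ℂ B) with hF
  set K : Unitization ℂ B := (k : Unitization ℂ B) with hK
  have hfC : F * star F * F = F := by
    have := congrArg (fun x : B => (x : Unitization ℂ B)) hf
    simpa only [Unitization.inr_mul, Unitization.inr_star] using this
  have hkC : ‖K‖ ≤ 1 := by rw [hK, Unitization.norm_inr]; exact hk
  have hcC : F * star F * K * (star F * F) = F := by
    have := congrArg (fun x : B => (x : Unitization ℂ B)) hc
    simpa only [Unitization.inr_mul, Unitization.inr_star] using this
  constructor
  · -- apply the one-sided lemma to the starred data
    have hKs : ‖star K‖ ≤ 1 := by rw [norm_star]; exact hkC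
    have hcg : star F * F * star K * (F * star F) = star F := by
      have h := congrArg star hcC
      simpa [star_mul, star_star, mul_assoc] using h
    have h := corner_right_unital (F := star F) (K := star K)
      (by rw [star_star]; exact qsf hfC) hKs (by rw [star_star]; exact hcg)
    rw [star_star] at h
    have h2 := congrArg star h
    simp only [star_mul, star_star] at h2
    have h3 : F * star F * K = F := by
      rw [mul_assoc]
      simpa [mul_assoc] using h2
    have : ((f * star f * k : B) : Unitization ℂ B) = ((f : B) : Unitization ℂ B) := by
      simpa only [Unitization.inr_mul, Unitization.inr_star] using h3
    exact Unitization.inr_injective this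
  · have h := corner_right_unital hfC hkC hcC
    have : ((k * (star f * f) : B) : Unitization ℂ B) = ((f : B) : Unitization ℂ B) := by
      simpa only [Unitization.inr_mul, Unitization.inr_star] using h
    exact Unitization.inr_injective this

end Corner

section Quant

variable {B : Type*} [NonUnitalCStarAlgebra B]

/-- If `f` and `f + D` are tripotents and the `P₂(f)`-corner of `D` vanishes, then `D`
is fully orthogonal to `f` and is itself a tripotent. -/
lemma key_tripotent {f D : B} (hf : f * star f * f = f)
    (htrip : (f + D) * star (f + D) * (f + D) = f + D)
    (hpDq : (f * star f) * (D * (star f * f)) = 0) :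
    (f * star f) * D = 0 ∧ D * (star f * f) = 0 ∧ D * star D * D = D := by
  have hknorm : ‖f + D‖ ≤ 1 := tripotent_norm_le htrip
  have hcorner : f * star f * (f + D) * (star f * f) = f := by
    rw [mul_add, add_mul, hf, f_q hf, mul_assoc (f * star f) D (star f * f), hpDq, add_zero]
  obtain ⟨hl, hr⟩ := corner hf hknorm hcorner
  have hpD : (f * star f) * D = 0 := by
    rw [mul_add, hf] at hl
    exact add_eq_left.mp hl
  have hDq : D * (star f * f) = 0 := by
    rw [add_mul, f_q hf] at hr
    exact add_eq_left.mp hr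
  exact ⟨hpD, hDq, orth_tripotent_add hf hpD hDq htrip⟩

/-- A function on `ℂ` with quantized difference norms and bounded range is constant. -/
lemma const_of_dichotomy {W : ℂ → B} {K : ℝ} (hbd : ∀ l, ‖W l‖ ≤ K)
    (hdi : ∀ l m : ℂ, l ≠ m → W l = W m ∨ ‖W l - W m‖ = ‖l - m‖) (l m : ℂ) :
    W l = W m := by
  have hK : 0 ≤ K := le_trans (norm_nonneg _) (hbd 0)
  have key : ∀ a b : ℂ, 2 * K < ‖a - b‖ → W a = W b := by
    intro a b hab
    have hne : a ≠ b := by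
      intro h; rw [h] at hab; simp at hab; linarith
    rcases hdi a b hne with h | h
    · exact h
    · exfalso
      have h2 : ‖W a - W b‖ ≤ 2 * K :=
        le_trans (norm_sub_le _ _) (by linarith [hbd a, hbd b])
      rw [h] at h2
      linarith
  rcases eq_or_ne l m with rfl | hne
  · rfl
  set ρ : ℂ := l + ((2 * K + 1 + ‖l - m‖ : ℝ) : ℂ) with hρ
  have h1 : ‖ρ - l‖ = 2 * K + 1 + ‖l - m‖ := by
    rw [hρ, add_sub_cancel_left, Complex.norm_real, Real.norm_eq_abs,
      abs_of_nonneg (by linarith [norm_nonneg (l - m)])]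
  have h3 : ‖ρ - l‖ ≤ ‖ρ - m‖ + ‖l - m‖ := by
    have hd : ρ - l = (ρ - m) - (l - m) := by ring
    rw [hd]
    exact norm_sub_le _ _
  have hwl := key ρ l (by rw [h1]; linarith [norm_nonneg (l - m)])
  have hwm := key ρ m (by linarith [h1 ▸ h3])
  rw [← hwl, hwm]

/-- If `n² ‖S‖ ≤ n C₁ + C₂` for all naturals `n`, then `S = 0`. -/
lemma eq_zero_of_sq_bound {S : B} {C1 C2 : ℝ}
    (h : ∀ n : ℕ, (n : ℝ) ^ 2 * ‖S‖ ≤ (n : ℝ) * C1 + C2) : S = 0 := by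
  by_contra hS
  have hpos : 0 < ‖S‖ := norm_pos_iff.mpr hS
  have hlin : ∀ n : ℕ, 1 ≤ n → (n : ℝ) * ‖S‖ ≤ C1 + |C2| := by
    intro n hn
    have hn1 : (1 : ℝ) ≤ (n : ℝ) := by exact_mod_cast hn
    have h2 : (n : ℝ) ^ 2 * ‖S‖ ≤ (n : ℝ) * (C1 + |C2|) := by
      calc (n : ℝ) ^ 2 * ‖S‖ ≤ n * C1 + C2 := h n
        _ ≤ n * C1 + n * |C2| := by nlinarith [le_abs_self C2, abs_nonneg C2]
        _ = n * (C1 + |C2|) := by ring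
    have h3 : (n : ℝ) * ((n : ℝ) * ‖S‖) ≤ (n : ℝ) * (C1 + |C2|) := by
      calc (n : ℝ) * ((n : ℝ) * ‖S‖) = (n : ℝ) ^ 2 * ‖S‖ := by ring
        _ ≤ (n : ℝ) * (C1 + |C2|) := h2
    exact le_of_mul_le_mul_left h3 (by linarith)
  obtain ⟨n, hn⟩ := exists_nat_gt (max ((C1 + |C2|) / ‖S‖) 0)
  have hn0 : (0 : ℝ) < n := lt_of_le_of_lt (le_max_right _ _) hn
  have hn1 : 1 ≤ n := Nat.cast_pos.mp hn0
  have hcontr := hlin n hn1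
  have hgt : (C1 + |C2|) / ‖S‖ < n := lt_of_le_of_lt (le_max_left _ _) hn
  rw [div_lt_iff₀ hpos] at hgt
  linarith

end Quant

section MainHelpers

lemma smul_cancel {M : Type*} [AddCommMonoid M] [Module ℂ M] {c : ℂ} (hc : c ≠ 0)
    {x y : M} (h : c • x = c • y) : x = y := by
  have h2 := congrArg (fun w => c⁻¹ • w) h
  simpa [smul_smul, inv_mul_cancel₀ hc] using h2

lemma half_smul_cancel {M : Type*} [AddCommMonoid M] [Module ℂ M] {x y : M}
    (h : (2⁻¹ : ℂ) • x = (2⁻¹ : ℂ) • y) : x = y :=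
  smul_cancel (by norm_num) h

lemma peirce2_double {R : Type*} [NonUnitalRing R] [Module ℂ R] {p q x : R}
    (hpp : p * p = p) (hqq : q * q = q)
    (h : p * (p * x + x * q) + (p * x + x * q) * q = p * x + x * q) :
    p * (x * q) = 0 := by
  simp only [mul_add, add_mul] at h
  rw [← mul_assoc p p x, hpp, mul_assoc x q q, hqq, mul_assoc p x q] at h
  have h3 : p * (x * q) + p * (x * q)
      = p * x + p * (x * q) + (p * (x * q) + x * q) - (p * x + x * q) := by abel
  rw [h, sub_self] at h3
  exact double_zero h3


lemma peirce2_of_halfsq {B : Type*} [NonUnitalCStarAlgebra B] {f x : B}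
    (hf : f * star f * f = f)
    (h : tp f f (tp f f x) = (2⁻¹ : ℂ) • tp f f x) :
    (f * star f) * (x * (star f * f)) = 0 := by
  simp only [tp_def] at h
  simp only [mul_smul_comm, smul_mul_assoc, smul_smul, ← smul_add] at h
  have h' := smul_cancel (show ((2 : ℂ)⁻¹ * (2 : ℂ)⁻¹ : ℂ) ≠ 0 by norm_num) h
  rw [mul_assoc x (star f) f] at h'
  rw [mul_assoc (f * star f * x + x * (star f * f)) (star f) f] at h'
  exact peirce2_double (idem_p hf) (idem_q hf) h'

variable {A B : Type*} [NonUnitalCStarAlgebra A] [NonUnitalCStarAlgebra B]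

lemma image_tripotent {Φ : A →L[ℂ] B} (hΦ : IsTripleHom Φ) {e : A}
    (he : e * star e * e = e) : Φ e * star (Φ e) * Φ e = Φ e := by
  have h := map_cube hΦ e
  rw [he] at h
  exact h.symm

end MainHelpers

section Main

variable {A B : Type*} [NonUnitalCStarAlgebra A] [NonUnitalCStarAlgebra B]

set_option maxHeartbeats 3000000 in
theorem main_general (T : A → B) (hT : Is2LocalTripleHom T)
    (e y z : A) (he : e * star e * e = e)
    (hy : tp e e y = (2⁻¹ : ℂ) • y) (hz : tp e e z = 0) :
    ∀ l : ℂ, T (l • e + y + z) = l • T e + T y + T z := by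
  classical
  -- ### A-side facts
  have hy1 : e * star e * y + y * star e * e = y := half_smul_cancel (by rw [← tp_def]; exact hy)
  have hz1 : e * star e * z + z * star e * e = 0 :=
    half_smul_cancel (by rw [← tp_def, smul_zero]; exact hz)
  have hppA := idem_p he
  have hqqA := idem_q he
  have hz1' : (e * star e) * z + z * (star e * e) = 0 := by
    rw [← mul_assoc z (star e) e]; exact hz1
  obtain ⟨hpz, hzq⟩ := peirce0 hppA hqqA hz1'
  obtain ⟨hsez, hzse, hesz, hsze⟩ := orth_products he hpz hzq
  have tpezy : tp e z y = 0 := by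
    rw [tp_def, hesz, mul_assoc y (star z) e, hsze, mul_zero, zero_mul, add_zero, smul_zero]
  have tpzey : tp z e y = 0 := by
    rw [tp_def, hzse, mul_assoc y (star e) z, hsez, mul_zero, zero_mul, add_zero, smul_zero]
  have tpyez : tp y e z = 0 := by
    rw [tp_def, hzse, mul_assoc y (star e) z, hsez, mul_zero, zero_mul, zero_add, smul_zero]
  -- ### B-side basics
  obtain ⟨Φ₀, hΦ₀, hΦ₀e, -⟩ := hT e e
  have hftrip : T e * star (T e) * T e = T e := by
    have h := image_tripotent hΦ₀ he
    rwa [hΦ₀e] at h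
  set f := T e with hf_def
  have hppB := idem_p hftrip
  have hqqB := idem_q hftrip
  -- ### Peirce facts for `T y` and `T z`
  obtain ⟨Φ₁, hΦ₁, hΦ₁y, hΦ₁e⟩ := hT y e
  have hΦ₁ef : Φ₁ e = f := by rw [hΦ₁e, hf_def]
  have hTy1 : f * star f * T y + T y * star f * f = T y := by
    have h := hΦ₁ e e y
    rw [hy, map_smul, hΦ₁y, hΦ₁ef, tp_def] at h
    exact (half_smul_cancel h).symm
  have hTy1' : (f * star f) * T y + T y * (star f * f) = T y := by
    rw [← mul_assoc (T y) (star f) f]; exact hTy1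
  have hTy2 : (f * star f) * (T y * (star f * f)) = 0 := peirce1_pxq hppB hqqB hTy1'
  obtain ⟨Φ₂, hΦ₂, hΦ₂z, hΦ₂e⟩ := hT z e
  have hΦ₂ef : Φ₂ e = f := by rw [hΦ₂e, hf_def]
  have hTz0 : f * star f * T z + T z * star f * f = 0 := by
    have h := hΦ₂ e e z
    rw [hz, map_zero, hΦ₂z, hΦ₂ef, tp_def] at h
    exact half_smul_cancel (by rw [smul_zero]; exact h.symm)
  have hTz0' : (f * star f) * T z + T z * (star f * f) = 0 := by
    rw [← mul_assoc (T z) (star f) f]; exact hTz0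
  obtain ⟨hTzp, hTzq⟩ := peirce0 hppB hqqB hTz0'
  obtain ⟨hsfTz, hTzsf, hfsTz, hsTzf⟩ := orth_products hftrip hTzp hTzq
  have tpfTzV : ∀ v : B, tp f (T z) v = 0 := fun v => by
    rw [tp_def, hfsTz, mul_assoc v (star (T z)) f, hsTzf, mul_zero, zero_mul, add_zero,
      smul_zero]
  have tpTzfV : ∀ v : B, tp (T z) f v = 0 := fun v => by
    rw [tp_def, hTzsf, mul_assoc v (star f) (T z), hsfTz, mul_zero, zero_mul, add_zero,
      smul_zero]
  -- ### The family `a l = l•e + y + z` : Peirce corner and norm bound for `W l`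
  have hWfacts : ∀ l : ℂ,
      (f * star f) * ((T (l • e + y + z) - l • f) * (star f * f)) = 0
      ∧ ‖T (l • e + y + z) - l • f‖ ≤ ‖y + z‖ := by
    intro l
    obtain ⟨Φ, hΦ, hΦa, hΦe⟩ := hT (l • e + y + z) e
    have hfe : Φ e = f := by rw [hΦe, hf_def]
    have hWeq : Φ (y + z) = T (l • e + y + z) - l • f := by
      have h1 : (y + z : A) = (l • e + y + z) - l • e := by abel
      rw [h1, map_sub, map_smul, hΦa, hfe]
    constructor
    · have hA : tp e e (tp e e (y + z)) = (2⁻¹ : ℂ) • tp e e (y + z) := by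
        rw [tp_add_right, hy, hz, add_zero, tp_smul_right, hy]
      have h1 := hΦ e e (y + z)
      have h2 := hΦ e e (tp e e (y + z))
      rw [hA, map_smul, h1, hfe] at h2
      have h3 := peirce2_of_halfsq hftrip h2.symm
      rwa [hWeq] at h3
    · rw [← hWeq]; exact norm_apply_le hΦ (y + z)
  -- ### dichotomy and constancy of `W`
  have hdiW : ∀ l m : ℂ, l ≠ m →
      (T (l • e + y + z) - l • f) = (T (m • e + y + z) - m • f)
      ∨ ‖(T (l • e + y + z) - l • f) - (T (m • e + y + z) - m • f)‖ = ‖l - m‖ := by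
    intro l m hlm
    have hc : l - m ≠ 0 := sub_ne_zero.mpr hlm
    obtain ⟨Φ, hΦ, hΦl, hΦm⟩ := hT (l • e + y + z) (m • e + y + z)
    have hktrip := image_tripotent hΦ he
    have hDiff : (l - m) • (Φ e - f)
        = (T (l • e + y + z) - l • f) - (T (m • e + y + z) - m • f) := by
      have h1 : ((l - m) • e : A) = (l • e + y + z) - (m • e + y + z) := by
        rw [sub_smul]; abel
      rw [smul_sub, ← map_smul Φ (l - m) e, h1, map_sub, hΦl, hΦm, sub_smul]
      abel
    have hpDq : (f * star f) * ((Φ e - f) * (star f * f)) = 0 := by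
      apply smul_cancel hc
      rw [smul_zero, ← mul_smul_comm, ← smul_mul_assoc, hDiff, sub_mul, mul_sub,
        (hWfacts l).1, (hWfacts m).1, sub_zero]
    have htrip2 : (f + (Φ e - f)) * star (f + (Φ e - f)) * (f + (Φ e - f))
        = f + (Φ e - f) := by
      have hk : f + (Φ e - f) = Φ e := by abel
      rw [hk]; exact hktrip
    obtain ⟨hpD, hDq, hDtrip⟩ := key_tripotent hftrip htrip2 hpDq
    rcases tripotent_norm_cases hDtrip with h0 | h1
    · left
      have hD0 : Φ e - f = 0 := norm_eq_zero.mp h0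
      rw [hD0, smul_zero] at hDiff
      exact sub_eq_zero.mp hDiff.symm
    · right
      rw [← hDiff, norm_smul, h1, mul_one]
  have hWconst : ∀ l m : ℂ, T (l • e + y + z) - l • f = T (m • e + y + z) - m • f :=
    const_of_dichotomy (W := fun l => T (l • e + y + z) - l • f)
      (fun l => (hWfacts l).2) hdiW
  set Wc := T ((0 : ℂ) • e + y + z) - (0 : ℂ) • f with hWc_def
  have hTa : ∀ l : ℂ, T (l • e + y + z) = l • f + Wc := by
    intro l
    have h := hWconst l 0
    rw [hWc_def, ← h]
    abel
  -- ### the `z`-family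
  have hZfacts : ∀ l : ℂ,
      (f * star f) * (T (l • e + z) - l • f) = 0
      ∧ (T (l • e + z) - l • f) * (star f * f) = 0
      ∧ ‖T (l • e + z) - l • f‖ ≤ ‖z‖ := by
    intro l
    obtain ⟨Φ, hΦ, hΦa, hΦe⟩ := hT (l • e + z) e
    have hfe : Φ e = f := by rw [hΦe, hf_def]
    have hZeq : Φ z = T (l • e + z) - l • f := by
      have h2 : Φ (l • e + z) - Φ (l • e) = Φ z := by
        rw [← map_sub]; congr 1; abel
      rw [← h2, hΦa, map_smul, hfe]
    have h := hΦ e e z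
    rw [hz, map_zero, hfe, hZeq, tp_def] at h
    have h0 : f * star f * (T (l • e + z) - l • f)
        + (T (l • e + z) - l • f) * star f * f = 0 :=
      half_smul_cancel (by rw [smul_zero]; exact h.symm)
    have h0' : (f * star f) * (T (l • e + z) - l • f)
        + (T (l • e + z) - l • f) * (star f * f) = 0 := by
      rw [← mul_assoc (T (l • e + z) - l • f) (star f) f]; exact h0
    obtain ⟨ha, hb⟩ := peirce0 hppB hqqB h0'
    exact ⟨ha, hb, by rw [← hZeq]; exact norm_apply_le hΦ z⟩
  have hdiZ : ∀ l m : ℂ, l ≠ m →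
      (T (l • e + z) - l • f) = (T (m • e + z) - m • f)
      ∨ ‖(T (l • e + z) - l • f) - (T (m • e + z) - m • f)‖ = ‖l - m‖ := by
    intro l m hlm
    have hc : l - m ≠ 0 := sub_ne_zero.mpr hlm
    obtain ⟨Φ, hΦ, hΦl, hΦm⟩ := hT (l • e + z) (m • e + z)
    have hktrip := image_tripotent hΦ he
    have hDiff : (l - m) • (Φ e - f)
        = (T (l • e + z) - l • f) - (T (m • e + z) - m • f) := by
      have h1 : ((l - m) • e : A) = (l • e + z) - (m • e + z) := by
        rw [sub_smul]; abel
      rw [smul_sub, ← map_smul Φ (l - m) e, h1, map_sub, hΦl, hΦm, sub_smul]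
      abel
    have hpD : (f * star f) * (Φ e - f) = 0 := by
      apply smul_cancel hc
      rw [smul_zero, ← mul_smul_comm, hDiff, mul_sub, (hZfacts l).1, (hZfacts m).1,
        sub_zero]
    have hDq : (Φ e - f) * (star f * f) = 0 := by
      apply smul_cancel hc
      rw [smul_zero, ← smul_mul_assoc, hDiff, sub_mul, (hZfacts l).2.1, (hZfacts m).2.1,
        sub_zero]
    have htrip2 : (f + (Φ e - f)) * star (f + (Φ e - f)) * (f + (Φ e - f))
        = f + (Φ e - f) := by
      have hk : f + (Φ e - f) = Φ e := by abel
      rw [hk]; exact hktrip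
    have hDtrip := orth_tripotent_add hftrip hpD hDq htrip2
    rcases tripotent_norm_cases hDtrip with h0 | h1
    · left
      have hD0 : Φ e - f = 0 := norm_eq_zero.mp h0
      rw [hD0, smul_zero] at hDiff
      exact sub_eq_zero.mp hDiff.symm
    · right
      rw [← hDiff, norm_smul, h1, mul_one]
  have hZconst : ∀ l m : ℂ, T (l • e + z) - l • f = T (m • e + z) - m • f :=
    const_of_dichotomy (W := fun l => T (l • e + z) - l • f)
      (fun l => (hZfacts l).2.2) hdiZ
  have hZid : ∀ l : ℂ, l ≠ 0 →
      ‖(T ((1 : ℂ) • e + z) - (1 : ℂ) • f) - T z‖ = 0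
      ∨ ‖(T ((1 : ℂ) • e + z) - (1 : ℂ) • f) - T z‖ = ‖l‖ := by
    intro l hl
    obtain ⟨Φ, hΦ, hΦa, hΦz⟩ := hT (l • e + z) z
    have hktrip := image_tripotent hΦ he
    have hkey : Φ (l • e) = T (l • e + z) - T z := by
      have h2 : Φ (l • e + z) - Φ z = Φ (l • e) := by
        rw [← map_sub]; congr 1; abel
      rw [← h2, hΦa, hΦz]
    have hDiff : l • (Φ e - f) = (T ((1 : ℂ) • e + z) - (1 : ℂ) • f) - T z := by
      have h2 : l • (Φ e - f) = (T (l • e + z) - l • f) - T z := by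
        rw [smul_sub, ← map_smul Φ l e, hkey]; abel
      rw [hZconst l 1] at h2
      exact h2
    have hpD : (f * star f) * (Φ e - f) = 0 := by
      apply smul_cancel hl
      rw [smul_zero, ← mul_smul_comm, hDiff, mul_sub, (hZfacts 1).1, hTzp, sub_zero]
    have hDq : (Φ e - f) * (star f * f) = 0 := by
      apply smul_cancel hl
      rw [smul_zero, ← smul_mul_assoc, hDiff, sub_mul, (hZfacts 1).2.1, hTzq, sub_zero]
    have htrip2 : (f + (Φ e - f)) * star (f + (Φ e - f)) * (f + (Φ e - f))
        = f + (Φ e - f) := by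
      have hk : f + (Φ e - f) = Φ e := by abel
      rw [hk]; exact hktrip
    have hDtrip := orth_tripotent_add hftrip hpD hDq htrip2
    rcases tripotent_norm_cases hDtrip with h0 | h1
    · left; rw [← hDiff, norm_smul, h0, mul_zero]
    · right; rw [← hDiff, norm_smul, h1, mul_one]
  have hZc : T ((1 : ℂ) • e + z) - (1 : ℂ) • f = T z := by
    rcases hZid 1 one_ne_zero with h1 | h1
    · exact norm_sub_eq_zero_iff.mp h1
    rcases hZid 2 two_ne_zero with h2 | h2
    · exact norm_sub_eq_zero_iff.mp h2
    exfalso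
    rw [h1] at h2
    rw [norm_one] at h2
    have : ‖(2 : ℂ)‖ = 2 := by
      rw [show (2 : ℂ) = ((2 : ℝ) : ℂ) by norm_num, Complex.norm_real]
      norm_num
    rw [this] at h2
    norm_num at h2
  have hTzfam : ∀ l : ℂ, T (l • e + z) = l • f + T z := by
    intro l
    have h := hZconst l 1
    rw [hZc] at h
    rw [← h]; abel
  -- ### the `y`-family
  have hYfacts : ∀ l : ℂ,
      (f * star f) * (T (l • e + y) - l • f)
        + (T (l • e + y) - l • f) * (star f * f) = T (l • e + y) - l • f
      ∧ (f * star f) * ((T (l • e + y) - l • f) * (star f * f)) = 0 := by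
    intro l
    obtain ⟨Φ, hΦ, hΦa, hΦe⟩ := hT (l • e + y) e
    have hfe : Φ e = f := by rw [hΦe, hf_def]
    have hYeq : Φ y = T (l • e + y) - l • f := by
      have h2 : Φ (l • e + y) - Φ (l • e) = Φ y := by
        rw [← map_sub]; congr 1; abel
      rw [← h2, hΦa, map_smul, hfe]
    have h := hΦ e e y
    rw [hy, map_smul, hfe, hYeq, tp_def] at h
    have h0 := half_smul_cancel h
    have h0' : (f * star f) * (T (l • e + y) - l • f)
        + (T (l • e + y) - l • f) * (star f * f) = T (l • e + y) - l • f := by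
      rw [← mul_assoc (T (l • e + y) - l • f) (star f) f]; exact h0.symm
    exact ⟨h0', peirce1_pxq hppB hqqB h0'⟩
  have hYconst : ∀ l m : ℂ, T (l • e + y) - l • f = T (m • e + y) - m • f := by
    intro l m
    rcases eq_or_ne l m with rfl | hlm
    · rfl
    have hc : l - m ≠ 0 := sub_ne_zero.mpr hlm
    obtain ⟨Φ, hΦ, hΦl, hΦm⟩ := hT (l • e + y) (m • e + y)
    have hktrip := image_tripotent hΦ he
    have hDiff : (l - m) • (Φ e - f)
        = (T (l • e + y) - l • f) - (T (m • e + y) - m • f) := by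
      have h1 : ((l - m) • e : A) = (l • e + y) - (m • e + y) := by
        rw [sub_smul]; abel
      rw [smul_sub, ← map_smul Φ (l - m) e, h1, map_sub, hΦl, hΦm, sub_smul]
      abel
    have hpDq : (f * star f) * ((Φ e - f) * (star f * f)) = 0 := by
      apply smul_cancel hc
      rw [smul_zero, ← mul_smul_comm, ← smul_mul_assoc, hDiff, sub_mul, mul_sub,
        (hYfacts l).2, (hYfacts m).2, sub_zero]
    have htrip2 : (f + (Φ e - f)) * star (f + (Φ e - f)) * (f + (Φ e - f))
        = f + (Φ e - f) := by
      have hk : f + (Φ e - f) = Φ e := by abel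
      rw [hk]; exact hktrip
    obtain ⟨hpD, hDq, -⟩ := key_tripotent hftrip htrip2 hpDq
    have hD1 : (f * star f) * (Φ e - f) + (Φ e - f) * (star f * f) = Φ e - f := by
      apply smul_cancel hc
      rw [smul_add, ← mul_smul_comm, ← smul_mul_assoc, hDiff, mul_sub, sub_mul]
      calc (f * star f) * (T (l • e + y) - l • f) - (f * star f) * (T (m • e + y) - m • f)
            + ((T (l • e + y) - l • f) * (star f * f)
              - (T (m • e + y) - m • f) * (star f * f))
          = ((f * star f) * (T (l • e + y) - l • f)
              + (T (l • e + y) - l • f) * (star f * f))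
            - ((f * star f) * (T (m • e + y) - m • f)
              + (T (m • e + y) - m • f) * (star f * f)) := by abel
        _ = (T (l • e + y) - l • f) - (T (m • e + y) - m • f) := by
            rw [(hYfacts l).1, (hYfacts m).1]
    have hD0 : Φ e - f = 0 := by
      rw [hpD, hDq, add_zero] at hD1
      exact hD1.symm
    rw [hD0, smul_zero] at hDiff
    exact sub_eq_zero.mp hDiff.symm
  have hYc : T ((1 : ℂ) • e + y) - (1 : ℂ) • f = T y := by
    obtain ⟨Φ, hΦ, hΦa, hΦy⟩ := hT ((1 : ℂ) • e + y) y
    have hktrip := image_tripotent hΦ he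
    have hDiff' : Φ e - f = (T ((1 : ℂ) • e + y) - (1 : ℂ) • f) - T y := by
      have h3 : Φ ((1 : ℂ) • e + y) - Φ y = Φ ((1 : ℂ) • e) := by
        rw [← map_sub]; congr 1; abel
      have h2 : (1 : ℂ) • (Φ e - f)
          = (T ((1 : ℂ) • e + y) - (1 : ℂ) • f) - T y := by
        rw [smul_sub, ← map_smul Φ 1 e, ← h3, hΦa, hΦy]
        abel
      rwa [one_smul] at h2
    have hpDq : (f * star f) * ((Φ e - f) * (star f * f)) = 0 := by
      rw [hDiff', sub_mul, mul_sub, (hYfacts 1).2, hTy2, sub_zero]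
    have htrip2 : (f + (Φ e - f)) * star (f + (Φ e - f)) * (f + (Φ e - f))
        = f + (Φ e - f) := by
      have hk : f + (Φ e - f) = Φ e := by abel
      rw [hk]; exact hktrip
    obtain ⟨hpD, hDq, -⟩ := key_tripotent hftrip htrip2 hpDq
    have hD1 : (f * star f) * (Φ e - f) + (Φ e - f) * (star f * f) = Φ e - f := by
      rw [hDiff', sub_mul, mul_sub]
      calc (f * star f) * (T ((1 : ℂ) • e + y) - (1 : ℂ) • f) - (f * star f) * T y
            + ((T ((1 : ℂ) • e + y) - (1 : ℂ) • f) * (star f * f) - T y * (star f * f))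
          = ((f * star f) * (T ((1 : ℂ) • e + y) - (1 : ℂ) • f)
              + (T ((1 : ℂ) • e + y) - (1 : ℂ) • f) * (star f * f))
            - ((f * star f) * T y + T y * (star f * f)) := by abel
        _ = (T ((1 : ℂ) • e + y) - (1 : ℂ) • f) - T y := by rw [(hYfacts 1).1, hTy1']
    have hD0 : Φ e - f = 0 := by
      rw [hpD, hDq, add_zero] at hD1
      exact hD1.symm
    rw [hD0] at hDiff'
    exact (sub_eq_zero.mp hDiff'.symm)
  have hTyfam : ∀ l : ℂ, T (l • e + y) = l • f + T y := by
    intro l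
    have h := hYconst l 1
    rw [hYc] at h
    rw [← h]; abel
  -- ### identification of the two Peirce components of the constant `Wc`
  set V := Wc - T z with hV_def
  have hVpei : (f * star f) * V + V * (star f * f) = V := by
    have hS : tp f f V - (2⁻¹ : ℂ) • V = 0 := by
      apply eq_zero_of_sq_bound (C1 := 0) (C2 := ‖tp z z y‖ + ‖tp (T z) (T z) V‖)
      intro n
      set l : ℂ := ((n : ℝ) : ℂ) with hl_def
      obtain ⟨Φ, hΦ, hΦa, hΦb⟩ := hT (l • e + y + z) (l • e + z)
      have hΦy : Φ y = V := by
        have h2 : Φ (l • e + y + z) - Φ (l • e + z) = Φ y := by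
          rw [← map_sub]; congr 1; abel
        rw [← h2, hΦa, hΦb, hTa l, hTzfam l, hV_def]
        abel
      have hAid : tp (l • e + z) (l • e + z) y
          = (l * starRingEnd ℂ l) • ((2⁻¹ : ℂ) • y) + tp z z y := by
        rw [tp_expand, hy, tpezy, tpzey, smul_zero, smul_zero, add_zero, add_zero]
      have hmain := hΦ (l • e + z) (l • e + z) y
      rw [hAid, map_add, map_smul, map_smul, hΦy, hΦb, hTzfam l] at hmain
      have hBid : tp (l • f + T z) (l • f + T z) V
          = (l * starRingEnd ℂ l) • tp f f V + tp (T z) (T z) V := by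
        rw [tp_expand, tpfTzV V, tpTzfV V, smul_zero, smul_zero, add_zero, add_zero]
      rw [hBid] at hmain
      have hrearr : (l * starRingEnd ℂ l) • (tp f f V - (2⁻¹ : ℂ) • V)
          = Φ (tp z z y) - tp (T z) (T z) V := by
        rw [smul_sub]
        calc (l * starRingEnd ℂ l) • tp f f V - (l * starRingEnd ℂ l) • ((2⁻¹ : ℂ) • V)
            = ((l * starRingEnd ℂ l) • tp f f V + tp (T z) (T z) V)
              - ((l * starRingEnd ℂ l) • ((2⁻¹ : ℂ) • V) + tp (T z) (T z) V) := by abel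
          _ = ((l * starRingEnd ℂ l) • ((2⁻¹ : ℂ) • V) + Φ (tp z z y))
              - ((l * starRingEnd ℂ l) • ((2⁻¹ : ℂ) • V) + tp (T z) (T z) V) := by
              rw [← hmain]
          _ = Φ (tp z z y) - tp (T z) (T z) V := by abel
      have hsc : (l * starRingEnd ℂ l) = (((n : ℝ) ^ 2 : ℝ) : ℂ) := by
        rw [hl_def, Complex.conj_ofReal, ← Complex.ofReal_mul, pow_two]
      calc (n : ℝ) ^ 2 * ‖tp f f V - (2⁻¹ : ℂ) • V‖
          = ‖(l * starRingEnd ℂ l) • (tp f f V - (2⁻¹ : ℂ) • V)‖ := by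
            rw [hsc, norm_smul, Complex.norm_real, Real.norm_eq_abs,
              abs_of_nonneg (sq_nonneg _)]
        _ = ‖Φ (tp z z y) - tp (T z) (T z) V‖ := by rw [hrearr]
        _ ≤ ‖Φ (tp z z y)‖ + ‖tp (T z) (T z) V‖ := norm_sub_le _ _
        _ ≤ ‖tp z z y‖ + ‖tp (T z) (T z) V‖ := by
            linarith [norm_apply_le hΦ (tp z z y)]
        _ ≤ (n : ℝ) * 0 + (‖tp z z y‖ + ‖tp (T z) (T z) V‖) := by simp
    have hVhalf : tp f f V = (2⁻¹ : ℂ) • V := sub_eq_zero.mp hS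
    rw [tp_def] at hVhalf
    have h0 := half_smul_cancel hVhalf
    rw [← mul_assoc V (star f) f]
    exact h0
  set U := Wc - T y with hU_def
  have hUzero : (f * star f) * U = 0 ∧ U * (star f * f) = 0 := by
    have hS : tp f f U = 0 := by
      apply eq_zero_of_sq_bound
        (C1 := ‖tp e y z‖ + ‖tp f (T y) U‖ + ‖tp (T y) f U‖)
        (C2 := ‖tp y y z‖ + ‖tp (T y) (T y) U‖)
      intro n
      set l : ℂ := ((n : ℝ) : ℂ) with hl_def
      obtain ⟨Φ, hΦ, hΦa, hΦb⟩ := hT (l • e + y + z) (l • e + y)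
      have hΦz : Φ z = U := by
        have h2 : Φ (l • e + y + z) - Φ (l • e + y) = Φ z := by
          rw [← map_sub]; congr 1; abel
        rw [← h2, hΦa, hΦb, hTa l, hTyfam l, hU_def]
        abel
      have hAid : tp (l • e + y) (l • e + y) z = l • tp e y z + tp y y z := by
        rw [tp_expand, hz, tpyez, smul_zero, smul_zero, zero_add, add_zero]
      have hmain := hΦ (l • e + y) (l • e + y) z
      rw [hAid, map_add, map_smul, hΦz, hΦb, hTyfam l] at hmain
      have hBid : tp (l • f + T y) (l • f + T y) U
          = (l * starRingEnd ℂ l) • tp f f U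
            + (l • tp f (T y) U + (starRingEnd ℂ l • tp (T y) f U
              + tp (T y) (T y) U)) := by
        rw [tp_expand]; abel
      rw [hBid] at hmain
      have hrearr : (l * starRingEnd ℂ l) • tp f f U
          = (l • Φ (tp e y z) + Φ (tp y y z))
            - (l • tp f (T y) U + (starRingEnd ℂ l • tp (T y) f U
              + tp (T y) (T y) U)) := by
        rw [hmain]; abel
      have hsc : (l * starRingEnd ℂ l) = (((n : ℝ) ^ 2 : ℝ) : ℂ) := by
        rw [hl_def, Complex.conj_ofReal, ← Complex.ofReal_mul, pow_two]
      have hnl : ‖l‖ = (n : ℝ) := by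
        rw [hl_def, Complex.norm_real, Real.norm_eq_abs, abs_of_nonneg (Nat.cast_nonneg n)]
      have hncl : ‖starRingEnd ℂ l‖ = (n : ℝ) := by
        rw [RCLike.norm_conj, hnl]
      calc (n : ℝ) ^ 2 * ‖tp f f U‖
          = ‖(l * starRingEnd ℂ l) • tp f f U‖ := by
            rw [hsc, norm_smul, Complex.norm_real, Real.norm_eq_abs,
              abs_of_nonneg (sq_nonneg _)]
        _ = ‖(l • Φ (tp e y z) + Φ (tp y y z))
            - (l • tp f (T y) U + (starRingEnd ℂ l • tp (T y) f U
              + tp (T y) (T y) U))‖ := by rw [hrearr]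
        _ ≤ ‖l • Φ (tp e y z) + Φ (tp y y z)‖
            + ‖l • tp f (T y) U + (starRingEnd ℂ l • tp (T y) f U
              + tp (T y) (T y) U)‖ := norm_sub_le _ _
        _ ≤ (‖l • Φ (tp e y z)‖ + ‖Φ (tp y y z)‖)
            + (‖l • tp f (T y) U‖ + (‖starRingEnd ℂ l • tp (T y) f U‖
              + ‖tp (T y) (T y) U‖)) := by
            exact add_le_add (norm_add_le _ _)
              (le_trans (norm_add_le _ _) (add_le_add_right (norm_add_le _ _) _))
        _ ≤ (n : ℝ) * (‖tp e y z‖ + ‖tp f (T y) U‖ + ‖tp (T y) f U‖)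
            + (‖tp y y z‖ + ‖tp (T y) (T y) U‖) := by
            rw [norm_smul, norm_smul, norm_smul, hnl, hncl]
            have hb1 := norm_apply_le hΦ (tp e y z)
            have hb2 := norm_apply_le hΦ (tp y y z)
            have hn0 : (0:ℝ) ≤ (n:ℝ) := Nat.cast_nonneg n
            nlinarith [norm_nonneg (tp f (T y) U), norm_nonneg (tp (T y) f U),
              norm_nonneg (Φ (tp e y z))]
    have h0 : (f * star f) * U + U * (star f * f) = 0 := by
      rw [tp_def] at hS
      have h1 : f * star f * U + U * star f * f = 0 :=
        half_smul_cancel (by rw [smul_zero]; exact hS)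
      rw [← mul_assoc U (star f) f]
      exact h1
    exact peirce0 hppB hqqB h0
  -- ### conclusion
  have hWcsum : Wc = T y + T z := by
    have hWcU : Wc = U + T y := by rw [hU_def]; abel
    have hpV : (f * star f) * V = (f * star f) * T y := by
      rw [hV_def, mul_sub, hTzp, sub_zero, hWcU, mul_add, hUzero.1, zero_add]
    have hVq : V * (star f * f) = T y * (star f * f) := by
      rw [hV_def, sub_mul, hTzq, sub_zero, hWcU, add_mul, hUzero.2, zero_add]
    have hVTy : V = T y := by rw [← hVpei, hpV, hVq, hTy1']
    rw [hV_def] at hVTy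
    rw [sub_eq_iff_eq_add] at hVTy
    rw [hVTy]
  intro l
  rw [hTa l, hWcsum]
  abel



end Main

end TwoLocalAux


/-- For a 2-local triple homomorphism from a von Neumann algebra, a tripotent `e`,
`y` in the Peirce-1 space and `z` in the Peirce-0 space of `e`:
`T (l • e + y + z) = l • T e + T y + T z` for all `l : ℂ`; in particular
`T (y + z) = T y + T z`. -/
theorem twoLocal_tripleHom_vonNeumann_peirce_additivity
    {H : Type*} [NormedAddCommGroup H] [InnerProductSpace ℂ H] [CompleteSpace H]
    (M : VonNeumannAlgebra H) {B : Type*} [NonUnitalCStarAlgebra B]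
    (T : M → B) (hT : Is2LocalTripleHom T)
    (e y z : M) (he : e * star e * e = e)
    (hy : tp e e y = (2⁻¹ : ℂ) • y) (hz : tp e e z = 0) :
    (∀ l : ℂ, T (l • e + y + z) = l • T e + T y + T z) ∧
    T (y + z) = T y + T z := by
  have h := TwoLocalAux.main_general T hT e y z he hy hz
  refine ⟨h, ?_⟩
  have h0 := h 0
  simpa using h0
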